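/- Linear contracts are max-min optimal: for every expected-reward function R, cost function c, and contract t, there exists α ∈ [0,1] such that the worst-case principal utility of the linear contract with parameter α is at least that of t, i.e., U_min(t_α) ≥ U_min(t), where t_α(x) = α·x. -/

import Mathlib

open Finset

/-- A finitely supported probability distribution over nonnegative rewards. -/
structure FinDist where
  m : ℕ
  val : Fin m → ℝ
  prob : Fin m → ℝ
  val_nonneg : ∀ i, 0 ≤ val i
  prob_nonneg : ∀ i, 0 ≤ prob i
  prob_sum : ∑ i, prob i = 1

/-- Expectation of `g` of the reward under the distribution `D`. -/
noncomputable def FinDist.exp (D : FinDist) (g : ℝ → ℝ) : ℝ :=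
  ∑ i, D.prob i * g (D.val i)

/-- A family of distributions `(D_S)_{S ⊆ A}` is compatible with the expected-reward
function `R` if `E_{X ∼ D_S}[X] = R(S)` for every `S`. -/
def Compatible (n : ℕ) (R : Finset (Fin n) → ℝ) (D : Finset (Fin n) → FinDist) : Prop :=
  ∀ S : Finset (Fin n), (D S).exp id = R S

/-- The agent's expected utility from action set `S` under contract `t`
and distributions `D`. -/
noncomputable def agentU (n : ℕ) (c : Fin n → ℝ) (t : ℝ → ℝ)
    (D : Finset (Fin n) → FinDist) (S : Finset (Fin n)) : ℝ :=
  (D S).exp t - ∑ a ∈ S, c a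

/-- The principal's expected utility from action set `S` under contract `t`
and distributions `D`. -/
noncomputable def prinU (n : ℕ) (t : ℝ → ℝ)
    (D : Finset (Fin n) → FinDist) (S : Finset (Fin n)) : ℝ :=
  (D S).exp (fun x => x - t x)

/-- `S` is a best response to contract `t` given distributions `D`: it maximizes the
agent's utility and, among agent-utility maximizers, the principal's utility. -/
def BR (n : ℕ) (c : Fin n → ℝ) (t : ℝ → ℝ) (D : Finset (Fin n) → FinDist)
    (S : Finset (Fin n)) : Prop :=
  (∀ T : Finset (Fin n), agentU n c t D T ≤ agentU n c t D S) ∧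
  (∀ T : Finset (Fin n),
    (∀ T' : Finset (Fin n), agentU n c t D T' ≤ agentU n c t D T) →
    prinU n t D T ≤ prinU n t D S)

/-- Linear contracts are max-min optimal: for every contract `t` there is a linear
contract `α ∈ [0,1]` whose worst-case principal utility (over all compatible
distribution families) is at least that of `t`: every lower bound on the worst-case
utility of `t` is also a lower bound on the worst-case utility of the linear contract. -/
noncomputable def twoPt (r p : ℝ) (hr : 0 ≤ r) (hp0 : 0 ≤ p) (hp1 : p ≤ 1) : FinDist where
  m := 2
  val := ![r, 0]
  prob := ![p, 1 - p]
  val_nonneg := by intro i; fin_cases i <;> simp [hr]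
  prob_nonneg := by intro i; fin_cases i <;> simp [hp0] <;> linarith
  prob_sum := by simp [Fin.sum_univ_two]

lemma twoPt_exp (r p : ℝ) (hr : 0 ≤ r) (hp0 : 0 ≤ p) (hp1 : p ≤ 1) (g : ℝ → ℝ) :
    (twoPt r p hr hp0 hp1).exp g = p * g r + (1 - p) * g 0 := by
  simp [FinDist.exp, twoPt, Fin.sum_univ_two]
  change ∑ i : Fin 2, ![p, 1 - p] i * g (![r, 0] i) = _
  simp [Fin.sum_univ_two]

lemma exists_BR (n : ℕ) (c : Fin n → ℝ) (t : ℝ → ℝ) (D : Finset (Fin n) → FinDist) :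
    ∃ S, BR n c t D S := by
  obtain ⟨S₀, _, hS₀⟩ := Finset.exists_max_image (Finset.univ : Finset (Finset (Fin n)))
      (agentU n c t D) ⟨∅, mem_univ _⟩
  set A := (Finset.univ : Finset (Finset (Fin n))).filter
      (fun T => ∀ T', agentU n c t D T' ≤ agentU n c t D T) with hA
  have hAne : A.Nonempty := ⟨S₀, by
    simp only [hA, mem_filter, mem_univ, true_and]
    exact fun T' => hS₀ T' (mem_univ _)⟩
  obtain ⟨S, hSA, hSmax⟩ := Finset.exists_max_image A (prinU n t D) hAne
  rw [hA, mem_filter] at hSA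
  exact ⟨S, hSA.2, fun T hT => hSmax T (by simp only [hA, mem_filter, mem_univ, true_and]; exact hT)⟩

lemma linear_exp (D : FinDist) (α : ℝ) :
    D.exp (fun x => α * x) = α * D.exp id := by
  simp only [FinDist.exp, id, Finset.mul_sum]
  exact Finset.sum_congr rfl fun i _ => by ring

lemma linear_prin_exp (D : FinDist) (α : ℝ) :
    D.exp (fun x => x - α * x) = (1 - α) * D.exp id := by
  simp only [FinDist.exp, id, Finset.mul_sum]
  exact Finset.sum_congr rfl fun i _ => by ring

theorem linear_contracts_maxmin_optimal (n : ℕ) (R : Finset (Fin n) → ℝ) (c : Fin n → ℝ)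
    (hR0 : R ∅ = 0) (hRmono : ∀ S T : Finset (Fin n), S ⊆ T → R S ≤ R T)
    (hRnn : ∀ S : Finset (Fin n), 0 ≤ R S) (hRA : 0 < R Finset.univ)
    (hc : ∀ a : Fin n, 0 < c a)
    (t : ℝ → ℝ) (ht : ∀ x : ℝ, 0 ≤ x → 0 ≤ t x) :
    ∃ α : ℝ, 0 ≤ α ∧ α ≤ 1 ∧
      ∀ u : ℝ,
        (∀ D : Finset (Fin n) → FinDist, Compatible n R D →
          ∀ S : Finset (Fin n), BR n c t D S → u ≤ prinU n t D S) →
        (∀ D : Finset (Fin n) → FinDist, Compatible n R D →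
          ∀ S : Finset (Fin n), BR n c (fun x => α * x) D S →
            u ≤ prinU n (fun x => α * x) D S) := by
  -- the adversarial distribution family: two-point on {r, 0}
  set r : ℝ := R Finset.univ + 1 with hrdef
  have hr0 : 0 < r := by have := hRnn Finset.univ; simp [hrdef]; linarith
  have hple : ∀ S : Finset (Fin n), R S / r ≤ 1 := by
    intro S
    rw [div_le_one hr0]
    have := hRmono S Finset.univ (subset_univ S)
    simp [hrdef]; linarith
  have hpnn : ∀ S : Finset (Fin n), 0 ≤ R S / r := fun S => div_nonneg (hRnn S) hr0.le
  set D : Finset (Fin n) → FinDist :=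
    fun S => twoPt r (R S / r) hr0.le (hpnn S) (hple S) with hD
  have hcompat : Compatible n R D := by
    intro S
    rw [hD]; rw [twoPt_exp]
    simp only [id]
    field_simp
    ring
  set β : ℝ := (t r - t 0) / r with hβ
  have ht0 : 0 ≤ t 0 := ht 0 le_rfl
  have htr : 0 ≤ t r := ht r hr0.le
  -- agent and principal utility formulas under D
  have hagent : ∀ S : Finset (Fin n),
      agentU n c t D S = β * R S + t 0 - ∑ a ∈ S, c a := by
    intro S
    rw [agentU, hD, twoPt_exp, hβ]
    field_simp
    ring
  have hprin : ∀ S : Finset (Fin n),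
      prinU n t D S = (1 - β) * R S - t 0 := by
    intro S
    rw [prinU, hD, twoPt_exp, hβ]
    field_simp
    ring
  -- formulas for linear contracts under any compatible family
  have hlinagent : ∀ (α : ℝ) (D' : Finset (Fin n) → FinDist), Compatible n R D' →
      ∀ T, agentU n c (fun x => α * x) D' T = α * R T - ∑ a ∈ T, c a := by
    intro α D' hD' T
    rw [agentU, linear_exp, hD' T]
  have hlinprin : ∀ (α : ℝ) (D' : Finset (Fin n) → FinDist), Compatible n R D' →
      ∀ T, prinU n (fun x => α * x) D' T = (1 - α) * R T := by
    intro α D' hD' T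
    rw [prinU, linear_prin_exp, hD' T]
  obtain ⟨S, hSbr⟩ := exists_BR n c t D
  rcases le_or_gt 0 β with hβ0 | hβ0
  · rcases le_or_gt β 1 with hβ1 | hβ1
    · -- main case: α = β
      refine ⟨β, hβ0, hβ1, fun u hu D' hD' S' hS' => ?_⟩
      have h1 : u ≤ (1 - β) * R S - t 0 := by
        have := hu D hcompat S hSbr
        rwa [hprin S] at this
      -- S maximizes β R - c
      have hSmax : ∀ T, β * R T - ∑ a ∈ T, c a ≤ β * R S - ∑ a ∈ S, c a := by
        intro T
        have := hSbr.1 T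
        rw [hagent T, hagent S] at this
        linarith
      -- S is an agent-maximizer for the linear contract, so S' dominates it in prinU
      have h2 : prinU n (fun x => β * x) D' S ≤ prinU n (fun x => β * x) D' S' := by
        apply hS'.2
        intro T'
        rw [hlinagent β D' hD' T', hlinagent β D' hD' S]
        exact hSmax T'
      rw [hlinprin β D' hD' S, hlinprin β D' hD' S'] at h2
      rw [hlinprin β D' hD' S']
      linarith
    · -- β > 1 : worst case of t is ≤ 0, take α = 1
      refine ⟨1, zero_le_one, le_rfl, fun u hu D' hD' S' hS' => ?_⟩
      have h1 : u ≤ (1 - β) * R S - t 0 := by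
        have := hu D hcompat S hSbr
        rwa [hprin S] at this
      have : (1 - β) * R S ≤ 0 := mul_nonpos_of_nonpos_of_nonneg (by linarith) (hRnn S)
      rw [hlinprin 1 D' hD' S']
      simp only [sub_self, zero_mul]
      linarith
  · -- β < 0 : agent picks ∅ (or zero-reward set), worst case ≤ 0, take α = 1
    refine ⟨1, zero_le_one, le_rfl, fun u hu D' hD' S' hS' => ?_⟩
    have h1 : u ≤ (1 - β) * R S - t 0 := by
      have := hu D hcompat S hSbr
      rwa [hprin S] at this
    -- agent prefers S over ∅
    have h2 : agentU n c t D ∅ ≤ agentU n c t D S := hSbr.1 ∅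
    rw [hagent ∅, hagent S, hR0] at h2
    have hcS : 0 ≤ ∑ a ∈ S, c a := Finset.sum_nonneg fun a _ => (hc a).le
    have hβR : β * R S ≤ 0 := mul_nonpos_of_nonpos_of_nonneg hβ0.le (hRnn S)
    -- from h2 : β * R S ≥ c S ≥ 0, so β * R S = 0, hence R S = 0
    have hβRS : β * R S = 0 := le_antisymm hβR (by simp at h2; linarith)
    have hRS : R S = 0 := by
      rcases mul_eq_zero.mp hβRS with h | h
      · exact absurd h (ne_of_lt hβ0)
      · exact h
    rw [hlinprin 1 D' hD' S']
    simp only [sub_self, zero_mul]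
    rw [hRS] at h1
    linarith
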